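/- A set S ⊆ ℕ is definable in Presburger arithmetic (first-order logic over (ℕ,+,<)) if and only if S is ultimately periodic, i.e., there exist t ∈ ℕ and p > 0 such that for all n ≥ t, n ∈ S ↔ n + p ∈ S. -/

import Mathlib

open FirstOrder

/-- The language of Presburger arithmetic: one binary function symbol (`+`)
and one binary relation symbol (`<`). -/
def presburgerLang : FirstOrder.Language where
  Functions n := match n with | 2 => Unit | _ => Empty
  Relations n := match n with | 2 => Unit | _ => Empty

/-- The standard structure `(ℕ, +, <)` for the Presburger language. -/
instance : presburgerLang.Structure ℕ where
  funMap {n} f x :=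
    match n, f with
    | 2, _ => x 0 + x 1
  RelMap {n} r x :=
    match n, r with
    | 2, _ => x 0 < x 1


namespace Pres

def Aff (k : ℕ) := (Fin k → ℕ) × ℕ

def evalA {k : ℕ} (f : Aff k) (x : Fin k → ℕ) : ℕ :=
  (∑ i, f.1 i * x i) + f.2

def addA {k : ℕ} (f g : Aff k) : Aff k := (fun i => f.1 i + g.1 i, f.2 + g.2)

def constA {k : ℕ} (c : ℕ) : Aff k := (fun _ => 0, c)

def varA {k : ℕ} (i : Fin k) : Aff k := (fun j => if j = i then 1 else 0, 0)

def smulA {k : ℕ} (c : ℕ) (f : Aff k) : Aff k := (fun i => c * f.1 i, c * f.2)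

@[simp] theorem evalA_addA {k : ℕ} (f g : Aff k) (x : Fin k → ℕ) :
    evalA (addA f g) x = evalA f x + evalA g x := by
  simp [evalA, addA, add_mul, Finset.sum_add_distrib]; ring

@[simp] theorem evalA_constA {k : ℕ} (c : ℕ) (x : Fin k → ℕ) :
    evalA (constA c) x = c := by simp [evalA, constA]

@[simp] theorem evalA_varA {k : ℕ} (i : Fin k) (x : Fin k → ℕ) :
    evalA (varA i) x = x i := by
  simp [evalA, varA]

@[simp] theorem evalA_smulA {k : ℕ} (c : ℕ) (f : Aff k) (x : Fin k → ℕ) :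
    evalA (smulA c f) x = c * evalA f x := by
  simp [evalA, smulA, mul_add, Finset.mul_sum, mul_assoc]

inductive Atom (k : ℕ) : Type
  | le : Aff k → Aff k → Atom k
  | cong : ℕ → Aff k → Aff k → Atom k

def evalAtom {k : ℕ} (a : Atom k) (x : Fin k → ℕ) : Prop :=
  match a with
  | .le f g => evalA f x ≤ evalA g x
  | .cong m f g => evalA f x ≡ evalA g x [MOD (m+1)]

instance {k : ℕ} (a : Atom k) (x : Fin k → ℕ) : Decidable (evalAtom a x) := by
  cases a with
  | le f g => exact inferInstanceAs (Decidable (_ ≤ _))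
  | cong m f g => exact inferInstanceAs (Decidable (_ = _))

def evalConj {k : ℕ} (c : List (Atom k)) (x : Fin k → ℕ) : Prop :=
  ∀ a ∈ c, evalAtom a x

abbrev DNF (k : ℕ) := List (List (Atom k))

def evalD {k : ℕ} (D : DNF k) (x : Fin k → ℕ) : Prop :=
  ∃ c ∈ D, evalConj c x

instance {k : ℕ} (c : List (Atom k)) (x : Fin k → ℕ) : Decidable (evalConj c x) :=
  List.decidableBAll _ c

instance {k : ℕ} (D : DNF k) (x : Fin k → ℕ) : Decidable (evalD D x) :=
  List.decidableBEx _ D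

/-! ### Boolean operations -/

def interD {k : ℕ} (D₁ D₂ : DNF k) : DNF k :=
  D₁.flatMap (fun c₁ => D₂.map (fun c₂ => c₁ ++ c₂))

theorem evalD_interD {k : ℕ} (D₁ D₂ : DNF k) (x : Fin k → ℕ) :
    evalD (interD D₁ D₂) x ↔ evalD D₁ x ∧ evalD D₂ x := by
  simp only [evalD, interD, List.mem_flatMap, List.mem_map]
  constructor
  · rintro ⟨c, ⟨c₁, h₁, c₂, h₂, rfl⟩, hc⟩
    simp only [evalConj, List.mem_append] at hc
    exact ⟨⟨c₁, h₁, fun a ha => hc a (Or.inl ha)⟩, ⟨c₂, h₂, fun a ha => hc a (Or.inr ha)⟩⟩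
  · rintro ⟨⟨c₁, h₁, hc₁⟩, ⟨c₂, h₂, hc₂⟩⟩
    exact ⟨c₁ ++ c₂, ⟨c₁, h₁, c₂, h₂, rfl⟩, fun a ha =>
      (List.mem_append.1 ha).elim (hc₁ a) (hc₂ a)⟩

theorem evalD_append {k : ℕ} (D₁ D₂ : DNF k) (x : Fin k → ℕ) :
    evalD (D₁ ++ D₂) x ↔ evalD D₁ x ∨ evalD D₂ x := by
  simp only [evalD, List.mem_append]
  constructor
  · rintro ⟨c, h | h, hc⟩
    · exact Or.inl ⟨c, h, hc⟩
    · exact Or.inr ⟨c, h, hc⟩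
  · rintro (⟨c, h, hc⟩ | ⟨c, h, hc⟩)
    exacts [⟨c, Or.inl h, hc⟩, ⟨c, Or.inr h, hc⟩]

theorem not_modEq_iff {M a b : ℕ} (hM : 0 < M) :
    ¬ a ≡ b [MOD M] ↔ ∃ j, 0 < j ∧ j < M ∧ a + j ≡ b [MOD M] := by
  have ha : a % M < M := Nat.mod_lt _ hM
  have hb : b % M < M := Nat.mod_lt _ hM
  constructor
  · intro h
    by_cases hlt : a % M < b % M
    · refine ⟨b % M - a % M, by omega, by omega, ?_⟩
      have h1 : a + (b % M - a % M) ≡ a % M + (b % M - a % M) [MOD M] :=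
        (Nat.mod_modEq a M).symm.add_right _
      rw [show a % M + (b % M - a % M) = b % M by omega] at h1
      exact h1.trans (Nat.mod_modEq b M)
    · have hgt : b % M < a % M := by
        rcases Nat.lt_trichotomy (a % M) (b % M) with h' | h' | h'
        · exact absurd h' hlt
        · exact absurd h' h
        · exact h'
      refine ⟨M + b % M - a % M, by omega, by omega, ?_⟩
      have h1 : a + (M + b % M - a % M) ≡ a % M + (M + b % M - a % M) [MOD M] :=
        (Nat.mod_modEq a M).symm.add_right _
      rw [show a % M + (M + b % M - a % M) = M + b % M by omega] at h1
      have h2 : M + b % M ≡ 0 + b % M [MOD M] :=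
        Nat.ModEq.add_right _ (by simp [Nat.ModEq])
      rw [Nat.zero_add] at h2
      exact h1.trans (h2.trans (Nat.mod_modEq b M))
  · rintro ⟨j, hj0, hjM, hj⟩ hab
    have h1 : a + j ≡ a [MOD M] := hj.trans hab.symm
    have h2 : (a % M + j) % M = a % M :=
      ((Nat.mod_modEq a M).add_right j).trans h1
    rcases Nat.lt_or_ge (a % M + j) M with h3 | h3
    · rw [Nat.mod_eq_of_lt h3] at h2; omega
    · rw [Nat.mod_eq_sub_mod h3, Nat.mod_eq_of_lt (by omega)] at h2; omega


def negAtom {k : ℕ} (a : Atom k) : DNF k :=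
  match a with
  | .le f g => [ [Atom.le (addA g (constA 1)) f] ]
  | .cong m f g => (List.range m).map (fun j => [Atom.cong m (addA f (constA (j+1))) g])

theorem evalD_negAtom {k : ℕ} (a : Atom k) (x : Fin k → ℕ) :
    evalD (negAtom a) x ↔ ¬ evalAtom a x := by
  cases a with
  | le f g =>
    simp [negAtom, evalD, evalConj, evalAtom]
  | cong m f g =>
    simp only [negAtom, evalD, List.mem_map, List.mem_range, evalConj, evalAtom]
    rw [not_modEq_iff (Nat.succ_pos m)]
    constructor
    · rintro ⟨c, ⟨j, hj, rfl⟩, hc⟩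
      have := hc _ (List.mem_singleton_self _)
      simp only [evalAtom, evalA_addA, evalA_constA] at this
      exact ⟨j + 1, Nat.succ_pos j, by omega, this⟩
    · rintro ⟨j, hj0, hjm, hj⟩
      refine ⟨[Atom.cong m (addA f (constA j)) g], ⟨j - 1, by omega, by rw [Nat.sub_add_cancel hj0]⟩, ?_⟩
      intro a ha
      rw [List.mem_singleton] at ha
      subst ha
      simpa [evalAtom] using hj

def negConj {k : ℕ} (c : List (Atom k)) : DNF k :=
  c.flatMap negAtom

theorem evalD_negConj {k : ℕ} (c : List (Atom k)) (x : Fin k → ℕ) :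
    evalD (negConj c) x ↔ ¬ evalConj c x := by
  simp only [negConj, evalConj, not_forall]
  constructor
  · rintro ⟨d, hd, hdc⟩
    rw [List.mem_flatMap] at hd
    obtain ⟨a, ha, had⟩ := hd
    refine ⟨a, ha, ?_⟩
    rw [← evalD_negAtom a x]
    exact ⟨d, had, hdc⟩
  · rintro ⟨a, ha, hna⟩
    rw [← evalD_negAtom a x] at hna
    obtain ⟨d, hd, hdc⟩ := hna
    exact ⟨d, List.mem_flatMap.2 ⟨a, ha, hd⟩, hdc⟩

def negD {k : ℕ} (D : DNF k) : DNF k :=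
  match D with
  | [] => [ [] ]
  | c :: D' => interD (negConj c) (negD D')

theorem evalD_negD {k : ℕ} (D : DNF k) (x : Fin k → ℕ) :
    evalD (negD D) x ↔ ¬ evalD D x := by
  induction D with
  | nil => simp [negD, evalD, evalConj]
  | cons c D' ih =>
    rw [negD, evalD_interD, evalD_negConj, ih]
    simp only [evalD, List.mem_cons]
    constructor
    · rintro ⟨h1, h2⟩ ⟨d, hd | hd, hdc⟩
      · exact h1 (hd ▸ hdc)
      · exact h2 ⟨d, hd, hdc⟩
    · intro h
      refine ⟨fun hc => h ⟨c, Or.inl rfl, hc⟩, fun ⟨d, hd, hdc⟩ => h ⟨d, Or.inr hd, hdc⟩⟩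


/-! ### Ultimate periodicity -/

def UPP (P : ℕ → Prop) : Prop := ∃ t p, 0 < p ∧ ∀ n ≥ t, (P n ↔ P (n + p))

theorem upp_congr {P Q : ℕ → Prop} (h : ∀ n, P n ↔ Q n) (hP : UPP P) : UPP Q := by
  obtain ⟨t, p, hp, hper⟩ := hP
  exact ⟨t, p, hp, fun n hn => (h n).symm.trans ((hper n hn).trans (h _))⟩

theorem upp_not {P : ℕ → Prop} (hP : UPP P) : UPP (fun n => ¬ P n) := by
  obtain ⟨t, p, hp, hper⟩ := hP
  exact ⟨t, p, hp, fun n hn => not_congr (hper n hn)⟩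

theorem upp_mult {P : ℕ → Prop} {t p : ℕ} (hper : ∀ n ≥ t, (P n ↔ P (n + p)))
    (k : ℕ) : ∀ n ≥ t, (P n ↔ P (n + k * p)) := by
  induction k with
  | zero => simp
  | succ k ih =>
    intro n hn
    rw [ih n hn, Nat.succ_mul, ← add_assoc]
    exact hper _ (by omega)

theorem upp_and {P Q : ℕ → Prop} (hP : UPP P) (hQ : UPP Q) : UPP (fun n => P n ∧ Q n) := by
  obtain ⟨t₁, p₁, hp₁, h₁⟩ := hP
  obtain ⟨t₂, p₂, hp₂, h₂⟩ := hQ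
  refine ⟨max t₁ t₂, p₁ * p₂, Nat.mul_pos hp₁ hp₂, fun n hn => ?_⟩
  have e₁ := upp_mult h₁ p₂ n (le_trans (le_max_left _ _) hn)
  have e₂ := upp_mult h₂ p₁ n (le_trans (le_max_right _ _) hn)
  rw [mul_comm p₂ p₁] at e₁
  rw [mul_comm p₁ p₂] at e₂
  rw [mul_comm p₂ p₁] at e₂
  exact and_congr e₁ e₂

theorem upp_or {P Q : ℕ → Prop} (hP : UPP P) (hQ : UPP Q) : UPP (fun n => P n ∨ Q n) := by
  have := upp_and (upp_not hP) (upp_not hQ)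
  refine upp_congr (fun n => ?_) (upp_not this)
  tauto

theorem upp_evtl_true {P : ℕ → Prop} {t : ℕ} (h : ∀ n ≥ t, P n) : UPP P :=
  ⟨t, 1, one_pos, fun n hn => iff_of_true (h n hn) (h _ (by omega))⟩

theorem upp_evtl_false {P : ℕ → Prop} {t : ℕ} (h : ∀ n ≥ t, ¬ P n) : UPP P :=
  ⟨t, 1, one_pos, fun n hn => iff_of_false (h n hn) (h _ (by omega))⟩

theorem evalA_const_fun {f : Aff 1} (n : ℕ) :
    evalA f (fun _ => n) = f.1 0 * n + f.2 := by
  simp [evalA]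

theorem upp_atom (a : Atom 1) : UPP (fun n => evalAtom a (fun _ => n)) := by
  cases a with
  | le f g =>
    simp only [evalAtom, evalA_const_fun]
    rcases Nat.lt_trichotomy (f.1 0) (g.1 0) with h | h | h
    · refine upp_evtl_true (t := f.2) (fun n hn => ?_)
      have : f.1 0 * n + n ≤ g.1 0 * n := by
        calc f.1 0 * n + n = (f.1 0 + 1) * n := by ring
        _ ≤ g.1 0 * n := Nat.mul_le_mul_right n h
      omega
    · rw [h]
      rcases le_or_gt f.2 g.2 with h' | h'
      · exact upp_evtl_true (t := 0) (fun n _ => by omega)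
      · exact upp_evtl_false (t := 0) (fun n _ => by omega)
    · refine upp_evtl_false (t := g.2 + 1) (fun n hn => ?_)
      have : g.1 0 * n + n ≤ f.1 0 * n := by
        calc g.1 0 * n + n = (g.1 0 + 1) * n := by ring
        _ ≤ f.1 0 * n := Nat.mul_le_mul_right n h
      omega
  | cong m f g =>
    refine ⟨0, m + 1, Nat.succ_pos m, fun n _ => ?_⟩
    simp only [evalAtom, evalA_const_fun]
    have key : ∀ c a : ℕ, c * n + a ≡ c * (n + (m+1)) + a [MOD (m+1)] := by
      intro c a
      have : c * (n + (m+1)) + a = c * n + a + c * (m+1) := by ring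
      rw [this]
      exact (Nat.modEq_zero_iff_dvd.2 ⟨c, mul_comm _ _⟩).symm.add_left _
    constructor
    · intro h
      exact (key (f.1 0) f.2).symm.trans (h.trans (key (g.1 0) g.2))
    · intro h
      exact (key (f.1 0) f.2).trans (h.trans (key (g.1 0) g.2).symm)

theorem upp_conj (c : List (Atom 1)) : UPP (fun n => evalConj c (fun _ => n)) := by
  induction c with
  | nil => exact upp_evtl_true (t := 0) (fun n _ => by simp [evalConj])
  | cons a c ih =>
    refine upp_congr (fun n => ?_) (upp_and (upp_atom a) ih)
    simp [evalConj]

theorem upp_dnf (D : DNF 1) : UPP (fun n => evalD D (fun _ => n)) := by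
  induction D with
  | nil => exact upp_evtl_false (t := 0) (fun n _ => by simp [evalD])
  | cons c D ih =>
    refine upp_congr (fun n => ?_) (upp_or (upp_conj c) ih)
    simp only [evalD, List.mem_cons]
    constructor
    · rintro (h | ⟨d, hd, hdc⟩)
      exacts [⟨c, Or.inl rfl, h⟩, ⟨d, Or.inr hd, hdc⟩]
    · rintro ⟨d, rfl | hd, hdc⟩
      exacts [Or.inl hdc, Or.inr ⟨d, hd, hdc⟩]


/-! ### Last-variable infrastructure -/

def lastC {k : ℕ} (f : Aff (k+1)) : ℕ := f.1 (Fin.last k)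

def dropA {k : ℕ} (f : Aff (k+1)) : Aff k := (fun i => f.1 i.castSucc, f.2)

theorem evalA_snoc {k : ℕ} (f : Aff (k+1)) (x : Fin k → ℕ) (y : ℕ) :
    evalA f (Fin.snoc x y) = evalA (dropA f) x + lastC f * y := by
  simp only [evalA, dropA, lastC, Fin.sum_univ_castSucc, Fin.snoc_castSucc, Fin.snoc_last]
  ring

def substCA {k : ℕ} (j : ℕ) (f : Aff (k+1)) : Aff k :=
  addA (dropA f) (constA (lastC f * j))

@[simp] theorem evalA_substCA {k : ℕ} (j : ℕ) (f : Aff (k+1)) (x : Fin k → ℕ) :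
    evalA (substCA j f) x = evalA f (Fin.snoc x j) := by
  simp [substCA, evalA_snoc]

def substConstAtom {k : ℕ} (j : ℕ) (a : Atom (k+1)) : Atom k :=
  match a with
  | .le f g => .le (substCA j f) (substCA j g)
  | .cong m f g => .cong m (substCA j f) (substCA j g)

theorem evalAtom_substConstAtom {k : ℕ} (j : ℕ) (a : Atom (k+1)) (x : Fin k → ℕ) :
    evalAtom (substConstAtom j a) x ↔ evalAtom a (Fin.snoc x j) := by
  cases a <;> simp [substConstAtom, evalAtom]

/-- Substitute using the implicit equation `c * z + E = G` (where `z` is the last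
variable): an atom over `k+1` variables becomes an atom over `k` variables. -/
def seA {k : ℕ} (c : ℕ) (E G : Aff k) (f g : Aff (k+1)) : Aff k :=
  addA (smulA c (dropA f)) (addA (smulA (lastC f) G) (smulA (lastC g) E))

def substEqAtom {k : ℕ} (c : ℕ) (E G : Aff k) (a : Atom (k+1)) : Atom k :=
  match a with
  | .le f g => .le (seA c E G f g) (seA c E G g f)
  | .cong m f g => .cong (c * (m+1) - 1) (seA c E G f g) (seA c E G g f)

theorem cong_mul_iff {c n a b : ℕ} (hc : 0 < c) :
    a ≡ b [MOD n] ↔ c * a ≡ c * b [MOD c * n] := by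
  show _ ↔ (c * a) % (c * n) = (c * b) % (c * n)
  rw [Nat.mul_mod_mul_left, Nat.mul_mod_mul_left]
  exact ⟨fun h => by rw [h], fun h => Nat.eq_of_mul_eq_mul_left hc h⟩

theorem cong_add_iff {n a b d : ℕ} :
    a ≡ b [MOD n] ↔ a + d ≡ b + d [MOD n] :=
  ⟨fun h => h.add_right d, fun h => h.add_right_cancel' d⟩

theorem substEqAtom_iff {k : ℕ} {c z : ℕ} {E G : Aff k} {x : Fin k → ℕ}
    (hc : 0 < c) (hz : c * z + evalA E x = evalA G x) (a : Atom (k+1)) :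
    evalAtom (substEqAtom c E G a) x ↔ evalAtom a (Fin.snoc x z) := by
  obtain ⟨f, g, rest⟩ : ∃ f g, (a = Atom.le f g) ∨ ∃ m, a = Atom.cong m f g := by
    cases a with
    | le f g => exact ⟨f, g, Or.inl rfl⟩
    | cong m f g => exact ⟨f, g, Or.inr ⟨m, rfl⟩⟩
  have key : ∀ f g : Aff (k+1),
      evalA (seA c E G f g) x = c * (evalA (dropA f) x + lastC f * z)
        + (lastC f + lastC g) * evalA E x := by
    intro f g
    simp only [seA, evalA_addA, evalA_smulA]
    rw [← hz]
    ring
  have key2 : ∀ f g : Aff (k+1),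
      evalA (seA c E G g f) x = c * (evalA (dropA g) x + lastC g * z)
        + (lastC f + lastC g) * evalA E x := by
    intro f g
    rw [key g f, add_comm (lastC g) (lastC f)]
  rcases rest with rfl | ⟨m, rfl⟩
  · simp only [substEqAtom, evalAtom]
    rw [key f g, key2 f g, evalA_snoc, evalA_snoc]
    constructor
    · intro h
      have h2 : c * (evalA (dropA f) x + lastC f * z) ≤
          c * (evalA (dropA g) x + lastC g * z) := by omega
      exact Nat.le_of_mul_le_mul_left h2 hc
    · intro h
      have h2 := Nat.mul_le_mul_left c h
      omega
  · simp only [substEqAtom, evalAtom]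
    rw [key f g, key2 f g, evalA_snoc, evalA_snoc,
      Nat.sub_add_cancel (Nat.succ_le_of_lt (Nat.mul_pos hc (Nat.succ_pos m)))]
    exact ((cong_mul_iff hc).trans cong_add_iff).symm


/-! ### Quantifier elimination -/

def moduli {k : ℕ} (conj : List (Atom (k+1))) : List ℕ :=
  conj.filterMap (fun a => match a with | .cong m _ _ => some (m+1) | _ => none)

def Mof {k : ℕ} (conj : List (Atom (k+1))) : ℕ :=
  (moduli conj).foldr Nat.lcm 1

theorem foldr_lcm_pos (l : List ℕ) (h : ∀ m ∈ l, 0 < m) : 0 < l.foldr Nat.lcm 1 := by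
  induction l with
  | nil => simp
  | cons m l ih =>
    exact Nat.lcm_pos (h m List.mem_cons_self)
      (ih fun m' hm' => h m' (List.mem_cons_of_mem m hm'))

theorem dvd_foldr_lcm (l : List ℕ) {m : ℕ} (hm : m ∈ l) : m ∣ l.foldr Nat.lcm 1 := by
  induction l with
  | nil => cases hm
  | cons m' l ih =>
    rcases List.mem_cons.1 hm with rfl | hm'
    · exact Nat.dvd_lcm_left _ _
    · exact dvd_trans (ih hm') (Nat.dvd_lcm_right _ _)

theorem moduli_pos {k : ℕ} (conj : List (Atom (k+1))) : ∀ m ∈ moduli conj, 0 < m := by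
  intro m hm
  rw [moduli, List.mem_filterMap] at hm
  obtain ⟨a, _, ha⟩ := hm
  cases a with
  | le f g => simp at ha
  | cong m' f g => simp at ha; omega

theorem Mof_pos {k : ℕ} (conj : List (Atom (k+1))) : 0 < Mof conj :=
  foldr_lcm_pos _ (moduli_pos conj)

theorem moduli_dvd_Mof {k : ℕ} (conj : List (Atom (k+1))) {m : ℕ} (hm : m ∈ moduli conj) :
    m ∣ Mof conj :=
  dvd_foldr_lcm _ hm

def lowers {k : ℕ} (conj : List (Atom (k+1))) : List (Aff (k+1) × Aff (k+1)) :=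
  conj.filterMap (fun a => match a with
    | .le f g => if lastC f < lastC g then some (f, g) else none
    | _ => none)

theorem mem_lowers {k : ℕ} {conj : List (Atom (k+1))} {f g : Aff (k+1)}
    (h : (f, g) ∈ lowers conj) : Atom.le f g ∈ conj ∧ lastC f < lastC g := by
  rw [lowers, List.mem_filterMap] at h
  obtain ⟨a, ha, hfg⟩ := h
  cases a with
  | le f' g' =>
    by_cases hlt : lastC f' < lastC g'
    · simp [hlt] at hfg
      obtain ⟨rfl, rfl⟩ := hfg
      exact ⟨ha, hlt⟩
    · simp [hlt] at hfg
  | cong m f' g' => simp at hfg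

theorem lowers_mem {k : ℕ} {conj : List (Atom (k+1))} {f g : Aff (k+1)}
    (h : Atom.le f g ∈ conj) (hlt : lastC f < lastC g) : (f, g) ∈ lowers conj := by
  rw [lowers, List.mem_filterMap]
  exact ⟨Atom.le f g, h, by simp [hlt]⟩

def elimConj {k : ℕ} (conj : List (Atom (k+1))) : DNF k :=
  (List.range (Mof conj)).map (fun j => conj.map (substConstAtom j))
  ++ (lowers conj).flatMap (fun fg =>
      (List.range ((lastC fg.2 - lastC fg.1) * Mof conj)).map (fun j =>
        Atom.le (dropA fg.2) (addA (dropA fg.1) (constA j)) ::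
        Atom.cong (lastC fg.2 - lastC fg.1 - 1) (addA (dropA fg.1) (constA j)) (dropA fg.2) ::
        conj.map (substEqAtom (lastC fg.2 - lastC fg.1) (dropA fg.2)
          (addA (dropA fg.1) (constA j)))))


theorem modEq_add_multiple {n X c : ℕ} (h : n ∣ c) : X ≡ X + c [MOD n] := by
  have h0 : c ≡ 0 [MOD n] := Nat.modEq_zero_iff_dvd.2 h
  have h1 := (Nat.ModEq.refl X).add h0.symm
  rwa [add_zero] at h1

theorem elimConj_correct {k : ℕ} (conj : List (Atom (k+1))) (x : Fin k → ℕ) :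
    evalD (elimConj conj) x ↔ ∃ y, evalConj conj (Fin.snoc x y) := by
  classical
  rw [elimConj, evalD_append]
  constructor
  · rintro (h | h)
    · obtain ⟨cl, hcl, hcc⟩ := h
      rw [List.mem_map] at hcl
      obtain ⟨j, _, rfl⟩ := hcl
      refine ⟨j, fun a ha => ?_⟩
      have := hcc _ (List.mem_map_of_mem ha)
      rwa [evalAtom_substConstAtom] at this
    · obtain ⟨cl, hcl, hcc⟩ := h
      rw [List.mem_flatMap] at hcl
      obtain ⟨fg, hfg, hcl⟩ := hcl
      rw [List.mem_map] at hcl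
      obtain ⟨j, _, rfl⟩ := hcl
      obtain ⟨f, g⟩ := fg
      obtain ⟨hmem, hlt⟩ := mem_lowers hfg
      set c : ℕ := lastC g - lastC f with hcdef
      have hc0 : 0 < c := by omega
      have h1 := hcc _ List.mem_cons_self
      have h2 := hcc _ (List.mem_cons_of_mem _ List.mem_cons_self)
      simp only [evalAtom, evalA_addA, evalA_constA] at h1 h2
      rw [Nat.sub_add_cancel hc0] at h2
      have hdvd : c ∣ (evalA (dropA f) x + j) - evalA (dropA g) x :=
        (Nat.modEq_iff_dvd' h1).1 h2.symm
      obtain ⟨z, hz⟩ := hdvd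
      have hzeq : c * z + evalA (dropA g) x
          = evalA (addA (dropA f) (constA j)) x := by
        simp only [evalA_addA, evalA_constA]
        omega
      refine ⟨z, fun a ha => ?_⟩
      rw [← substEqAtom_iff hc0 hzeq a]
      exact hcc _ (List.mem_cons_of_mem _ (List.mem_cons_of_mem _
        (List.mem_map_of_mem ha)))
  · rintro ⟨y, hy⟩
    set M : ℕ := Mof conj with hMdef
    have hM : 0 < M := Mof_pos conj
    have hP : ∃ z, evalConj conj (Fin.snoc x z) := ⟨y, hy⟩
    set z₀ := Nat.find hP with hz₀def
    have spec : evalConj conj (Fin.snoc x z₀) := Nat.find_spec hP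
    by_cases hzM : z₀ < M
    · left
      refine ⟨conj.map (substConstAtom z₀),
        List.mem_map.2 ⟨z₀, List.mem_range.2 hzM, rfl⟩, fun a' ha' => ?_⟩
      rw [List.mem_map] at ha'
      obtain ⟨a, ha, rfl⟩ := ha'
      rw [evalAtom_substConstAtom]
      exact spec a ha
    · push_neg at hzM
      have hfail : ¬ evalConj conj (Fin.snoc x (z₀ - M)) :=
        Nat.find_min hP (by omega)
      obtain ⟨a, ha, hna⟩ : ∃ a ∈ conj, ¬ evalAtom a (Fin.snoc x (z₀ - M)) := by
        by_contra h
        push_neg at h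
        exact hfail h
      have hhold : evalAtom a (Fin.snoc x z₀) := spec a ha
      cases a with
      | cong m f g =>
        exfalso
        apply hna
        have hdvd : (m+1) ∣ M := moduli_dvd_Mof conj
          (List.mem_filterMap.2 ⟨_, ha, rfl⟩)
        rw [evalAtom, evalA_snoc, evalA_snoc] at hhold ⊢
        have e1 : lastC f * z₀ = lastC f * (z₀ - M) + lastC f * M := by
          rw [← Nat.mul_add]; congr 1; omega
        have e2 : lastC g * z₀ = lastC g * (z₀ - M) + lastC g * M := by
          rw [← Nat.mul_add]; congr 1; omega
        rw [e1, e2, ← add_assoc, ← add_assoc] at hhold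
        have hα : (m+1) ∣ lastC f * M := hdvd.mul_left _
        have hβ : (m+1) ∣ lastC g * M := hdvd.mul_left _
        exact (modEq_add_multiple hα).trans
          (hhold.trans (modEq_add_multiple hβ).symm)
      | le f g =>
        by_cases hab : lastC g ≤ lastC f
        · exfalso
          apply hna
          rw [evalAtom, evalA_snoc, evalA_snoc] at hhold ⊢
          have e1 : lastC f * (z₀ - M) + lastC f * M = lastC f * z₀ := by
            rw [← Nat.mul_add]; congr 1; omega
          have e2 : lastC g * (z₀ - M) + lastC g * M = lastC g * z₀ := by
            rw [← Nat.mul_add]; congr 1; omega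
          have e3 : lastC g * M ≤ lastC f * M := Nat.mul_le_mul_right M hab
          omega
        · push_neg at hab
          right
          set c : ℕ := lastC g - lastC f with hcdef
          have hc0 : 0 < c := by omega
          rw [evalAtom, evalA_snoc, evalA_snoc] at hhold hna
          have e1 : c * z₀ + lastC f * z₀ = lastC g * z₀ := by
            rw [← Nat.add_mul]; congr 1; omega
          have e2 : c * (z₀ - M) + lastC f * (z₀ - M) = lastC g * (z₀ - M) := by
            rw [← Nat.add_mul]; congr 1; omega
          have e3 : c * (z₀ - M) + c * M = c * z₀ := by
            rw [← Nat.mul_add]; congr 1; omega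
          obtain ⟨j, hjlt, hjeq⟩ : ∃ j, j < c * M ∧
              evalA (dropA f) x + j = evalA (dropA g) x + c * z₀ := by
            refine ⟨evalA (dropA g) x + c * z₀ - evalA (dropA f) x, ?_, ?_⟩ <;> omega
          refine ⟨_, List.mem_flatMap.2 ⟨(f, g), lowers_mem ha hab,
            List.mem_map.2 ⟨j, List.mem_range.2 hjlt, rfl⟩⟩, ?_⟩
          have hzeq : c * z₀ + evalA (dropA g) x
              = evalA (addA (dropA f) (constA j)) x := by
            simp only [evalA_addA, evalA_constA]
            omega
          intro a' ha'
          rcases List.mem_cons.1 ha' with rfl | ha'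
          · simp only [evalAtom, evalA_addA, evalA_constA]
            omega
          rcases List.mem_cons.1 ha' with rfl | ha'
          · simp only [evalAtom, evalA_addA, evalA_constA]
            rw [Nat.sub_add_cancel hc0]
            have : evalA (dropA f) x + j = evalA (dropA g) x + c * z₀ := hjeq
            rw [this]
            exact ((Nat.ModEq.refl (evalA (dropA g) x)).add
              (Nat.modEq_zero_iff_dvd.2 ⟨z₀, rfl⟩)).trans
              (by rw [add_zero])
          · rw [List.mem_map] at ha'
            obtain ⟨a, ha2, rfl⟩ := ha'
            rw [substEqAtom_iff hc0 hzeq a]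
            exact spec a ha2

def elimD {k : ℕ} (D : DNF (k+1)) : DNF k := D.flatMap elimConj

theorem elimD_correct {k : ℕ} (D : DNF (k+1)) (x : Fin k → ℕ) :
    evalD (elimD D) x ↔ ∃ y, evalD D (Fin.snoc x y) := by
  unfold elimD
  constructor
  · rintro ⟨cl, hcl, hcc⟩
    rw [List.mem_flatMap] at hcl
    obtain ⟨conj, hconj, hcl⟩ := hcl
    obtain ⟨y, hy⟩ := (elimConj_correct conj x).1 ⟨cl, hcl, hcc⟩
    exact ⟨y, conj, hconj, hy⟩
  · rintro ⟨y, conj, hconj, hy⟩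
    obtain ⟨cl, hcl, hcc⟩ := (elimConj_correct conj x).2 ⟨y, hy⟩
    exact ⟨cl, List.mem_flatMap.2 ⟨conj, hconj, hcl⟩, hcc⟩

end Pres

namespace Pres

open FirstOrder.Language

theorem funMap_eq (f : presburgerLang.Functions 2) (v : Fin 2 → ℕ) :
    Structure.funMap f v = v 0 + v 1 := rfl

theorem relMap_eq (r : presburgerLang.Relations 2) (v : Fin 2 → ℕ) :
    Structure.RelMap r v = (v 0 < v 1) := rfl

theorem term_to_aff {n : ℕ} (t : presburgerLang.Term (Fin 1 ⊕ Fin n)) :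
    ∃ F : Aff (n+1), ∀ (v : Fin 1 → ℕ) (xs : Fin n → ℕ),
      t.realize (Sum.elim v xs) = evalA F (Fin.cons (v 0) xs) := by
  induction t with
  | var i =>
    rcases i with i | i
    · refine ⟨varA 0, fun v xs => ?_⟩
      simp [Term.realize, Fin.eq_zero i]
    · refine ⟨varA i.succ, fun v xs => ?_⟩
      simp [Term.realize]
  | @func l f ts ih =>
    match l, f, ts, ih with
    | 0, f, _, _ => exact Empty.elim f
    | 1, f, _, _ => exact Empty.elim f
    | (m+3), f, _, _ => exact Empty.elim f
    | 2, f, ts, ih =>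
      obtain ⟨F₀, h₀⟩ := ih 0
      obtain ⟨F₁, h₁⟩ := ih 1
      refine ⟨addA F₀ F₁, fun v xs => ?_⟩
      rw [Term.realize, funMap_eq, evalA_addA, h₀, h₁]

theorem formula_to_dnf : ∀ {n : ℕ} (φ : presburgerLang.BoundedFormula (Fin 1) n),
    ∃ D : DNF (n+1), ∀ (v : Fin 1 → ℕ) (xs : Fin n → ℕ),
      (φ.Realize v xs ↔ evalD D (Fin.cons (v 0) xs)) := by
  intro n φ
  induction φ with
  | falsum =>
    exact ⟨[], fun v xs => by simp [BoundedFormula.Realize, evalD]⟩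
  | equal t₁ t₂ =>
    obtain ⟨F₁, h₁⟩ := term_to_aff t₁
    obtain ⟨F₂, h₂⟩ := term_to_aff t₂
    refine ⟨[ [.le F₁ F₂, .le F₂ F₁] ], fun v xs => ?_⟩
    have : (BoundedFormula.equal t₁ t₂).Realize v xs ↔
        t₁.realize (Sum.elim v xs) = t₂.realize (Sum.elim v xs) := Iff.rfl
    rw [this, h₁ v xs, h₂ v xs]
    simp [evalD, evalConj, evalAtom]
    omega
  | @rel n l R ts =>
    match l, R, ts with
    | 0, R, _ => exact Empty.elim R
    | 1, R, _ => exact Empty.elim R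
    | (m+3), R, _ => exact Empty.elim R
    | 2, R, ts =>
      obtain ⟨F₀, h₀⟩ := term_to_aff (ts 0)
      obtain ⟨F₁, h₁⟩ := term_to_aff (ts 1)
      refine ⟨[ [.le (addA F₀ (constA 1)) F₁] ], fun v xs => ?_⟩
      have hr : (BoundedFormula.rel R ts).Realize v xs ↔
          Structure.RelMap R (fun i => Term.realize (Sum.elim v xs) (ts i)) := Iff.rfl
      simp only [hr, relMap_eq, h₀ v xs, h₁ v xs, evalD, evalConj, evalAtom]
      simp [evalAtom]
  | imp φ ψ ihφ ihψ =>
    obtain ⟨D₁, h₁⟩ := ihφ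
    obtain ⟨D₂, h₂⟩ := ihψ
    refine ⟨negD D₁ ++ D₂, fun v xs => ?_⟩
    rw [BoundedFormula.realize_imp, h₁ v xs, h₂ v xs, evalD_append, evalD_negD]
    tauto
  | all φ ihφ =>
    obtain ⟨D, h⟩ := ihφ
    refine ⟨negD (elimD (negD D)), fun v xs => ?_⟩
    rw [BoundedFormula.realize_all, evalD_negD, elimD_correct]
    constructor
    · intro hall ⟨y, hy⟩
      rw [evalD_negD] at hy
      exact hy (by
        have := (h v (Fin.snoc xs y)).1 (hall y)
        rwa [Fin.cons_snoc_eq_snoc_cons] at this)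
    · intro hne y
      rw [h v (Fin.snoc xs y), Fin.cons_snoc_eq_snoc_cons]
      by_contra hy
      exact hne ⟨y, (evalD_negD _ _).2 hy⟩


/-! ### Backward direction: formulas for singletons and arithmetic progressions -/

abbrev PTerm (n : ℕ) := presburgerLang.Term (Fin 1 ⊕ Fin n)

def tadd {n : ℕ} (t s : PTerm n) : PTerm n :=
  Term.func (l := 2) (Unit.unit : presburgerLang.Functions 2) ![t, s]

def tX {n : ℕ} : PTerm n := Term.var (Sum.inl 0)

def bv {n : ℕ} (i : Fin n) : PTerm n := Term.var (Sum.inr i)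

def nsm {n : ℕ} : ℕ → PTerm n → PTerm n
  | 0, t => t
  | c+1, t => tadd t (nsm c t)

@[simp] theorem realize_tadd {n : ℕ} (t s : PTerm n) (w : Fin 1 ⊕ Fin n → ℕ) :
    Term.realize w (tadd t s) = Term.realize w t + Term.realize w s := by
  rfl

@[simp] theorem realize_tX {n : ℕ} (w : Fin 1 ⊕ Fin n → ℕ) :
    Term.realize w (tX : PTerm n) = w (Sum.inl 0) := rfl

@[simp] theorem realize_bv {n : ℕ} (i : Fin n) (w : Fin 1 ⊕ Fin n → ℕ) :
    Term.realize w (bv i) = w (Sum.inr i) := rfl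

theorem realize_nsm {n : ℕ} (c : ℕ) (t : PTerm n) (w : Fin 1 ⊕ Fin n → ℕ) :
    Term.realize w (nsm c t) = (c + 1) * Term.realize w t := by
  induction c with
  | zero => simp [nsm]
  | succ c ih => rw [nsm, realize_tadd, ih]; ring

def fz {n : ℕ} (t : PTerm n) : presburgerLang.BoundedFormula (Fin 1) n :=
  Term.bdEqual (tadd t t) t

def flt {n : ℕ} (t s : PTerm n) : presburgerLang.BoundedFormula (Fin 1) n :=
  Relations.boundedFormula₂ Unit.unit t s

theorem realize_fz {n : ℕ} (t : PTerm n) (v : Fin 1 → ℕ) (xs : Fin n → ℕ) :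
    (fz t).Realize v xs ↔ Term.realize (Sum.elim v xs) t = 0 := by
  rw [fz, BoundedFormula.realize_bdEqual, realize_tadd]
  omega

theorem realize_flt {n : ℕ} (t s : PTerm n) (v : Fin 1 → ℕ) (xs : Fin n → ℕ) :
    (flt t s).Realize v xs ↔
      Term.realize (Sum.elim v xs) t < Term.realize (Sum.elim v xs) s := by
  exact Iff.rfl

def oneAt {n : ℕ} (i : Fin n) : presburgerLang.BoundedFormula (Fin 1) n :=
  ∼(fz (bv i)) ⊓ ∀' (flt (bv (Fin.last n)) (bv i.castSucc) ⟹ fz (bv (Fin.last n)))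

theorem realize_oneAt {n : ℕ} (i : Fin n) (v : Fin 1 → ℕ) (xs : Fin n → ℕ) :
    (oneAt i).Realize v xs ↔ xs i = 1 := by
  rw [oneAt, BoundedFormula.realize_inf, BoundedFormula.realize_not, realize_fz,
    BoundedFormula.realize_all]
  simp only [BoundedFormula.realize_imp, realize_flt, realize_fz, realize_bv,
    Sum.elim_inr, Fin.snoc_last, Fin.snoc_castSucc]
  constructor
  · rintro ⟨h1, h2⟩
    rcases Nat.lt_or_ge (xs i) 2 with h | h
    · omega
    · have := h2 1 (by omega)
      omega
  · intro h
    exact ⟨by omega, fun a ha => by omega⟩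


theorem def1_iff (s : Set ℕ) :
    (∅ : Set ℕ).Definable₁ presburgerLang s ↔
      ∃ φ : presburgerLang.Formula (Fin 1),
        {x : Fin 1 → ℕ | x 0 ∈ s} = setOf φ.Realize :=
  Set.empty_definable_iff

theorem formula_realize_eq (φ : presburgerLang.Formula (Fin 1)) (x : Fin 1 → ℕ) :
    φ.Realize x ↔ BoundedFormula.Realize φ x default := by
  unfold Formula.Realize
  exact iff_of_eq (congrArg _ (funext fun i => i.elim0))

theorem def_single (m : ℕ) :
    (∅ : Set ℕ).Definable₁ presburgerLang ({m} : Set ℕ) := by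
  rw [def1_iff]
  cases m with
  | zero =>
    refine ⟨fz tX, ?_⟩
    ext x
    simp only [Set.mem_setOf_eq]
    change _ ↔ Formula.Realize _ x
    rw [formula_realize_eq, realize_fz]
    simp
  | succ m' =>
    refine ⟨∃' (oneAt (0 : Fin 1) ⊓ Term.bdEqual tX (nsm m' (bv 0))), ?_⟩
    ext x
    simp only [Set.mem_setOf_eq]
    change _ ↔ Formula.Realize _ x
    rw [formula_realize_eq, BoundedFormula.realize_ex]
    simp only [BoundedFormula.realize_inf, realize_oneAt, BoundedFormula.realize_bdEqual,
      realize_nsm, realize_tX, realize_bv, Sum.elim_inl, Sum.elim_inr, Set.mem_singleton_iff]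
    constructor
    · intro h
      exact ⟨1, by rfl, by rw [h]; simp [Fin.snoc]⟩
    · rintro ⟨a, h1, h2⟩
      have ha : (Fin.snoc (default : Fin 0 → ℕ) a : Fin 1 → ℕ) 0 = a := rfl
      rw [ha] at h1
      rw [h2, ha, h1]
      ring

theorem def_AP (m p : ℕ) (hp : 0 < p) :
    (∅ : Set ℕ).Definable₁ presburgerLang {n : ℕ | ∃ k, n = m + p * k} := by
  rw [def1_iff]
  have hp1 : p - 1 + 1 = p := by omega
  cases m with
  | zero =>
    refine ⟨∃' (Term.bdEqual tX (nsm (p-1) (bv 0))), ?_⟩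
    ext x
    simp only [Set.mem_setOf_eq]
    change _ ↔ Formula.Realize _ x
    rw [formula_realize_eq, BoundedFormula.realize_ex]
    simp only [BoundedFormula.realize_bdEqual, realize_nsm, realize_tX, realize_bv,
      Sum.elim_inl, Sum.elim_inr, hp1]
    constructor
    · rintro ⟨k, hk⟩
      refine ⟨k, ?_⟩
      have hsk : (Fin.snoc (default : Fin 0 → ℕ) k : Fin 1 → ℕ) 0 = k := rfl
      rw [hsk, hk]
      omega
    · rintro ⟨a, ha⟩
      have hsa : (Fin.snoc (default : Fin 0 → ℕ) a : Fin 1 → ℕ) 0 = a := rfl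
      rw [hsa] at ha
      exact ⟨a, by omega⟩
  | succ m' =>
    refine ⟨∃' ∃' (oneAt (0 : Fin 2) ⊓
      Term.bdEqual tX (tadd (nsm m' (bv 0)) (nsm (p-1) (bv 1)))), ?_⟩
    ext x
    simp only [Set.mem_setOf_eq]
    change _ ↔ Formula.Realize _ x
    rw [formula_realize_eq, BoundedFormula.realize_ex]
    simp only [BoundedFormula.realize_ex, BoundedFormula.realize_inf, realize_oneAt,
      BoundedFormula.realize_bdEqual, realize_tadd, realize_nsm, realize_tX, realize_bv,
      Sum.elim_inl, Sum.elim_inr, hp1]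
    have hv : ∀ a b : ℕ,
        (Fin.snoc (Fin.snoc (default : Fin 0 → ℕ) a) b : Fin 2 → ℕ) 0 = a ∧
        (Fin.snoc (Fin.snoc (default : Fin 0 → ℕ) a) b : Fin 2 → ℕ) 1 = b := by
      intro a b
      constructor <;> rfl
    constructor
    · rintro ⟨k, hk⟩
      refine ⟨1, k, ?_, ?_⟩
      · exact (hv 1 k).1
      · rw [(hv 1 k).1, (hv 1 k).2, hk]
        ring
    · rintro ⟨a, b, h1, h2⟩
      rw [(hv a b).1] at h1
      rw [(hv a b).1, (hv a b).2, h1] at h2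
      exact ⟨b, by rw [h2]; ring⟩

theorem def1_union {A B : Set ℕ}
    (hA : (∅ : Set ℕ).Definable₁ presburgerLang A)
    (hB : (∅ : Set ℕ).Definable₁ presburgerLang B) :
    (∅ : Set ℕ).Definable₁ presburgerLang (A ∪ B) :=
  Set.Definable.union hA hB

theorem def1_empty : (∅ : Set ℕ).Definable₁ presburgerLang (∅ : Set ℕ) :=
  Set.definable_empty

theorem def1_biUnion (F : Finset ℕ) (f : ℕ → Set ℕ)
    (h : ∀ m ∈ F, (∅ : Set ℕ).Definable₁ presburgerLang (f m)) :
    (∅ : Set ℕ).Definable₁ presburgerLang (⋃ m ∈ F, f m) := by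
  classical
  induction F using Finset.induction_on with
  | empty =>
    have he : (⋃ m ∈ (∅ : Finset ℕ), f m) = ∅ := by simp
    rw [he]; exact def1_empty
  | @insert a F' ha ih =>
    have he : (⋃ m ∈ insert a F', f m) = f a ∪ ⋃ m ∈ F', f m := by
      simp [Set.biUnion_insert]
    rw [he]
    exact def1_union (h a (Finset.mem_insert_self a F'))
      (ih fun m hm => h m (Finset.mem_insert_of_mem hm))

theorem forward_dir (S : Set ℕ)
    (h : (∅ : Set ℕ).Definable₁ presburgerLang S) :
    ∃ t : ℕ, ∃ p : ℕ, 0 < p ∧ ∀ n ≥ t, (n ∈ S ↔ n + p ∈ S) := by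
  rw [def1_iff] at h
  obtain ⟨φ, hφ⟩ := h
  obtain ⟨D, hD⟩ := formula_to_dnf φ
  have key : ∀ n : ℕ, n ∈ S ↔ evalD D (fun _ : Fin 1 => n) := by
    intro n
    have h1 : ((fun _ => n) : Fin 1 → ℕ) ∈ {x : Fin 1 → ℕ | x 0 ∈ S} ↔
        ((fun _ => n) : Fin 1 → ℕ) ∈ setOf (Formula.Realize (M := ℕ) φ) := by rw [hφ]
    simp only [Set.mem_setOf_eq] at h1
    have h2 := hD (fun _ => n) default
    have h3 : (Fin.cons n (default : Fin 0 → ℕ) : Fin 1 → ℕ) = fun _ => n := by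
      funext i
      refine Fin.cases rfl (fun i => i.elim0) i
    rw [h3] at h2
    exact h1.trans ((formula_realize_eq φ _).trans h2)
  obtain ⟨t, p, hpos, hper⟩ := upp_dnf D
  exact ⟨t, p, hpos, fun n hn => (key n).trans ((hper n hn).trans (key (n + p)).symm)⟩

theorem backward_dir (S : Set ℕ) (t p : ℕ) (hp : 0 < p)
    (hper : ∀ n ≥ t, (n ∈ S ↔ n + p ∈ S)) :
    (∅ : Set ℕ).Definable₁ presburgerLang S := by
  classical
  have hdecomp : S = (⋃ m ∈ (Finset.range (t+p)).filter (· ∈ S), ({m} : Set ℕ))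
      ∪ (⋃ m ∈ (Finset.Ico t (t+p)).filter (· ∈ S), {n : ℕ | ∃ k, n = m + p * k}) := by
    ext n
    simp only [Set.mem_union, Set.mem_iUnion, Finset.mem_filter, Finset.mem_range,
      Finset.mem_Ico, Set.mem_singleton_iff, Set.mem_setOf_eq, exists_prop]
    constructor
    · intro hn
      rcases Nat.lt_or_ge n (t+p) with hlt | hge
      · exact Or.inl ⟨n, ⟨hlt, hn⟩, rfl⟩
      · right
        obtain ⟨q, r, hqr, hrp⟩ : ∃ q r, p * q + r = n - t ∧ r < p :=
          ⟨(n - t) / p, (n - t) % p, Nat.div_add_mod _ _, Nat.mod_lt _ hp⟩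
        refine ⟨t + r, ⟨⟨by omega, by omega⟩, ?_⟩, ⟨q, by omega⟩⟩
        have h2 := upp_mult (P := (· ∈ S)) hper q (t + r) (by omega)
        have e : t + r + q * p = n := by rw [mul_comm]; omega
        rw [e] at h2
        exact h2.2 hn
    · rintro (⟨m, ⟨_, hmS⟩, rfl⟩ | ⟨m, ⟨⟨htm, _⟩, hmS⟩, k, rfl⟩)
      · exact hmS
      · have h2 := upp_mult (P := (· ∈ S)) hper k m htm
        rw [show m + p * k = m + k * p by ring]
        exact h2.1 hmS
  rw [hdecomp]
  exact def1_union (def1_biUnion _ _ fun m _ => def_single m)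
    (def1_biUnion _ _ fun m _ => def_AP m p hp)

end Pres


/-- A set of naturals is Presburger-definable (first-order definable over
`(ℕ, +, <)`) iff it is ultimately periodic. -/
theorem presburger_definable_iff_ultimately_periodic (S : Set ℕ) :
    (∅ : Set ℕ).Definable₁ presburgerLang S ↔
      ∃ t : ℕ, ∃ p : ℕ, 0 < p ∧ ∀ n ≥ t, (n ∈ S ↔ n + p ∈ S) := by
  exact ⟨Pres.forward_dir S, fun ⟨t, p, hp, hper⟩ => Pres.backward_dir S t p hp hper⟩
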